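/- Let H : Ω̄ → ℝ² be Lipschitz on a bounded open Ω with 0 < h̲ ≤ H₂ ≤ h̄, and let X(·, w) be the maximal solution of X' = H(X), X(0) = (w, h) defined on (α₋(w), α₊(w)). Then the limits lim_{t → α₊(w)⁻} X(t, w) and lim_{t → α₋(w)⁺} X(t, w) exist, and they belong to ∂Ω ∩ {x₂ > h} and ∂Ω ∩ {x₂ < h} respectively. -/

import Mathlib

open Set Filter

lemma hasDerivAt_cfst {X : ℝ → ℝ × ℝ} {v : ℝ × ℝ} {t : ℝ} (hX : HasDerivAt X v t) :
    HasDerivAt (fun s => (X s).1) v.1 t := by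
  have := ((ContinuousLinearMap.fst ℝ ℝ ℝ).hasFDerivAt.comp t hX.hasFDerivAt).hasDerivAt
  simp at this
  exact this

lemma hasDerivAt_csnd {X : ℝ → ℝ × ℝ} {v : ℝ × ℝ} {t : ℝ} (hX : HasDerivAt X v t) :
    HasDerivAt (fun s => (X s).2) v.2 t := by
  have := ((ContinuousLinearMap.snd ℝ ℝ ℝ).hasFDerivAt.comp t hX.hasFDerivAt).hasDerivAt
  simp at this
  exact this

lemma extendRight {Ω : Set (ℝ × ℝ)} (hΩo : IsOpen Ω) {H : ℝ × ℝ → ℝ × ℝ} {K : NNReal}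
    (hHlip : LipschitzOnWith K H (closure Ω)) {αm αp : ℝ} {X : ℝ → ℝ × ℝ} (hlt : αm < αp)
    (hODE : ∀ t ∈ Set.Ioo αm αp, X t ∈ Ω ∧ HasDerivAt X (H (X t)) t)
    {p : ℝ × ℝ} (hp : Filter.Tendsto X (nhdsWithin αp (Set.Iio αp)) (nhds p)) (hpΩ : p ∈ Ω) :
    ∃ b, αp < b ∧ ∃ Y : ℝ → ℝ × ℝ,
      (∀ t ∈ Set.Ioo αm b, Y t ∈ Ω ∧ HasDerivAt Y (H (Y t)) t) ∧
      (∀ t ∈ Set.Ioo αm αp, Y t = X t) := by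
  -- closed ball around p inside Ω
  obtain ⟨R, hR, hball⟩ : ∃ R > 0, Metric.closedBall p R ⊆ Ω :=
    (Metric.nhds_basis_closedBall.mem_iff.1 (hΩo.mem_nhds hpΩ)).imp
      (fun R hR => ⟨hR.1, hR.2⟩)
  set C : ℝ := ‖H p‖ + K * R with hC
  have hC0 : 0 ≤ C := add_nonneg (norm_nonneg _) (mul_nonneg K.2 hR.le)
  set ε : ℝ := R / (C + 1) with hε
  have hε0 : 0 < ε := div_pos hR (by linarith)
  have hballsub : Metric.closedBall p R ⊆ closure Ω := hball.trans subset_closure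
  have hPL : IsPicardLindelof (fun _ => H) (tmin := αp - ε) (tmax := αp + ε)
      ⟨αp, ⟨by linarith, by linarith⟩⟩ p ⟨R, hR.le⟩ 0 ⟨C, hC0⟩ K :=
    { lipschitzOnWith := fun t _ => hHlip.mono hballsub
      continuousOn := fun _ _ => continuousOn_const
      norm_le := fun t _ x hx => by
        have h1 : dist (H x) (H p) ≤ K * dist x p :=
          hHlip.dist_le_mul x (hballsub hx) p (subset_closure hpΩ)
        have h2 : dist x p ≤ R := hx
        have h3 : ‖H x‖ ≤ ‖H p‖ + dist (H x) (H p) := by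
          rw [dist_eq_norm]
          calc ‖H x‖ = ‖H p + (H x - H p)‖ := by ring_nf
            _ ≤ ‖H p‖ + ‖H x - H p‖ := norm_add_le _ _
        have h4 : (K : ℝ) * dist x p ≤ K * R := by
          exact mul_le_mul_of_nonneg_left h2 K.2
        calc ‖H x‖ ≤ ‖H p‖ + K * dist x p := h3.trans (by linarith)
          _ ≤ C := by rw [hC]; linarith
      mul_max_le := by
        show C * max (αp + ε - αp) (αp - (αp - ε)) ≤ R - 0
        rw [sub_zero]
        have hmax : max (αp + ε - αp) (αp - (αp - ε)) = ε := by
          rw [add_sub_cancel_left, sub_sub_cancel, max_self]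
        rw [hmax, hε]
        rw [div_eq_iff (by linarith : C + 1 ≠ 0)] at *
        have : C * (R / (C + 1)) ≤ (C + 1) * (R / (C + 1)) := by
          apply mul_le_mul_of_nonneg_right (by linarith) (by positivity)
        calc C * (R / (C + 1)) ≤ (C + 1) * (R / (C + 1)) := this
          _ = R := by field_simp }
  obtain ⟨Z, hZ0, hZ⟩ := hPL.exists_eq_forall_mem_Icc_hasDerivWithinAt₀
  replace hZ0 : Z αp = p := hZ0
  have hZderiv : ∀ t ∈ Ioo (αp - ε) (αp + ε), HasDerivAt Z (H (Z t)) t := fun t ht =>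
    (hZ t (Ioo_subset_Icc_self ht)).hasDerivAt (Icc_mem_nhds ht.1 ht.2)
  have hαpmem : αp ∈ Ioo (αp - ε) (αp + ε) := ⟨by linarith, by linarith⟩
  -- find δ so that Z maps ball αp δ into Ω
  have hZcont : ContinuousAt Z αp := (hZderiv αp hαpmem).continuousAt
  have hZΩ : Z ⁻¹' Ω ∈ nhds αp := hZcont.preimage_mem_nhds (hΩo.mem_nhds (hZ0 ▸ hpΩ))
  obtain ⟨δ, hδ0, hδ⟩ := Metric.mem_nhds_iff.1 hZΩ
  obtain ⟨m, hm0, hmδ, hmε⟩ : ∃ m, 0 < m ∧ m < δ ∧ m < ε :=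
    ⟨min (δ / 2) (ε / 2), lt_min (by linarith) (by linarith),
      lt_of_le_of_lt (min_le_left _ _) (by linarith),
      lt_of_le_of_lt (min_le_right _ _) (by linarith)⟩
  set b : ℝ := αp + m with hb
  have hbαp : αp < b := by rw [hb]; linarith
  have hbε : b < αp + ε := by rw [hb]; linarith
  -- the extension of X to αp by continuity
  set Xb : ℝ → ℝ × ℝ := fun t => if t < αp then X t else p with hXb
  have hXbαp : Xb αp = p := if_neg (lt_irrefl αp)
  have hXbeq : EqOn Xb X (Ioo αm αp) := fun r hr => if_pos hr.2
  have hs_mem : Ioo αm αp ∈ nhdsWithin αp (Iio αp) :=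
    Ioo_mem_nhdsLT_of_mem ⟨hlt, le_refl αp⟩
  have hXder : HasDerivWithinAt Xb (H p) (Iic αp) αp := by
    apply hasDerivWithinAt_Iic_of_tendsto_deriv (s := Ioo αm αp)
    · intro r hr
      exact ((hODE r hr).2.differentiableAt.differentiableWithinAt).congr
        (fun x hx => hXbeq hx) (hXbeq hr)
    · rw [ContinuousWithinAt, hXbαp]
      apply Filter.Tendsto.congr' _ (hp.mono_left (nhdsWithin_mono _ Ioo_subset_Iio_self))
      exact Filter.eventuallyEq_of_mem self_mem_nhdsWithin (fun r hr => (hXbeq hr).symm)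
    · exact hs_mem
    · have hHX : Tendsto (fun t => H (X t)) (nhdsWithin αp (Iio αp)) (nhds (H p)) := by
        apply (hHlip.continuousOn.continuousWithinAt (subset_closure hpΩ)).tendsto.comp
        rw [tendsto_nhdsWithin_iff]
        exact ⟨hp, Filter.mem_of_superset hs_mem fun t ht => subset_closure (hODE t ht).1⟩
      apply Filter.Tendsto.congr' _ hHX
      apply Filter.eventuallyEq_of_mem hs_mem
      intro r hr
      have h1 : Xb =ᶠ[nhds r] X :=
        Filter.eventuallyEq_of_mem (Iio_mem_nhds hr.2) (fun x hx => if_pos hx)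
      show H (X r) = deriv Xb r
      rw [h1.deriv_eq, (hODE r hr).2.deriv]
  -- glued function
  set Y : ℝ → ℝ × ℝ := fun t => if t < αp then X t else Z t with hY
  have hYeq : ∀ t ∈ Ioo αm αp, Y t = X t := fun t ht => if_pos ht.2
  have hYαp : Y αp = p := by rw [hY]; simp [hZ0]
  have hYIic : HasDerivWithinAt Y (H p) (Iic αp) αp := by
    apply hXder.congr _ (by rw [hYαp, hXbαp])
    intro r hr
    by_cases h : r < αp
    · simp [hY, hXb, h]
    · have : r = αp := le_antisymm hr (not_lt.1 h)
      simp [hY, hXb, h, this, hZ0]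
  have hYIci : HasDerivWithinAt Y (H p) (Ici αp) αp := by
    have := (hZderiv αp hαpmem).hasDerivWithinAt (s := Ici αp)
    rw [hZ0] at this
    apply this.congr _ (by rw [hYαp, hZ0])
    intro r hr
    by_cases h : r < αp
    · exact absurd hr (not_le.2 h)
    · simp [hY, h]
  have hYderivαp : HasDerivAt Y (H p) αp := by
    have := hYIic.union hYIci
    rw [Iic_union_Ici] at this
    exact hasDerivWithinAt_univ.mp this
  refine ⟨b, hbαp, Y, ?_, hYeq⟩
  intro t ht
  rcases lt_trichotomy t αp with h | h | h
  · have htm : t ∈ Ioo αm αp := ⟨ht.1, h⟩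
    have hYX : Y =ᶠ[nhds t] X :=
      Filter.eventuallyEq_of_mem (Iio_mem_nhds h) (fun x hx => if_pos hx)
    refine ⟨by rw [hYeq t htm]; exact (hODE t htm).1, ?_⟩
    have h2 : HasDerivAt Y (H (X t)) t := hYX.hasDerivAt_iff.mpr (hODE t htm).2
    rwa [← hYeq t htm] at h2
  · subst h
    refine ⟨by rw [hYαp]; exact hpΩ, by rw [hYαp]; exact hYderivαp⟩
  · have hYZ : Y =ᶠ[nhds t] Z :=
      Filter.eventuallyEq_of_mem (Ioi_mem_nhds h) (fun x hx => if_neg (not_lt.2 (le_of_lt hx)))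
    have htZ : t ∈ Ioo (αp - ε) (αp + ε) := ⟨by linarith, lt_trans ht.2 hbε⟩
    have hYt : Y t = Z t := if_neg (not_lt.2 h.le)
    have htΩ : Z t ∈ Ω := by
      apply hδ
      rw [Metric.mem_ball, Real.dist_eq, abs_of_pos (by linarith : (0:ℝ) < t - αp)]
      have : t < αp + m := by rw [← hb]; exact ht.2
      linarith
    refine ⟨by rw [hYt]; exact htΩ, ?_⟩
    have h2 : HasDerivAt Y (H (Z t)) t := hYZ.hasDerivAt_iff.mpr (hZderiv t htZ)
    rwa [← hYt] at h2

lemma extendLeft {Ω : Set (ℝ × ℝ)} (hΩo : IsOpen Ω) {H : ℝ × ℝ → ℝ × ℝ} {K : NNReal}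
    (hHlip : LipschitzOnWith K H (closure Ω)) {αm αp : ℝ} {X : ℝ → ℝ × ℝ} (hlt : αm < αp)
    (hODE : ∀ t ∈ Set.Ioo αm αp, X t ∈ Ω ∧ HasDerivAt X (H (X t)) t)
    {q : ℝ × ℝ} (hq : Filter.Tendsto X (nhdsWithin αm (Set.Ioi αm)) (nhds q)) (hqΩ : q ∈ Ω) :
    ∃ c, c < αm ∧ ∃ Y : ℝ → ℝ × ℝ,
      (∀ t ∈ Set.Ioo c αp, Y t ∈ Ω ∧ HasDerivAt Y (H (Y t)) t) ∧
      (∀ t ∈ Set.Ioo αm αp, Y t = X t) := by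
  set H' : ℝ × ℝ → ℝ × ℝ := fun x => -H x with hH'
  have hHlip' : LipschitzOnWith K H' (closure Ω) := by
    rw [← one_mul K]
    exact LipschitzWith.id.neg.comp_lipschitzOnWith hHlip
  set X' : ℝ → ℝ × ℝ := fun t => X (-t) with hX'
  have hODE' : ∀ t ∈ Set.Ioo (-αp) (-αm), X' t ∈ Ω ∧ HasDerivAt X' (H' (X' t)) t := by
    intro t ht
    have htm : -t ∈ Set.Ioo αm αp := ⟨by cases ht; linarith, by cases ht; linarith⟩
    refine ⟨(hODE (-t) htm).1, ?_⟩
    have h2 : HasDerivAt (fun s : ℝ => X (-s)) ((-1 : ℝ) • H (X (-t))) t :=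
      HasDerivAt.scomp t (hODE (-t) htm).2 (hasDerivAt_neg t)
    simpa [hX', hH'] using h2
  have hneg : Filter.Tendsto (fun t : ℝ => -t) (nhdsWithin (-αm) (Set.Iio (-αm)))
      (nhdsWithin αm (Set.Ioi αm)) := by
    apply tendsto_nhdsWithin_iff.mpr
    constructor
    · have h1 := (continuous_neg.tendsto (-αm)).mono_left
        (nhdsWithin_le_nhds (s := Set.Iio (-αm)))
      simpa using h1
    · filter_upwards [self_mem_nhdsWithin] with x hx
      simp only [Set.mem_Iio] at hx
      simp only [Set.mem_Ioi]
      linarith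
  have hq' : Filter.Tendsto X' (nhdsWithin (-αm) (Set.Iio (-αm))) (nhds q) := hq.comp hneg
  obtain ⟨b, hbgt, Y', hY'ode, hY'eq⟩ :=
    extendRight hΩo hHlip' (by linarith : -αp < -αm) hODE' hq' hqΩ
  refine ⟨-b, by linarith, fun t => Y' (-t), ?_, ?_⟩
  · intro t ht
    have htm : -t ∈ Set.Ioo (-αp) b := ⟨by cases ht; linarith, by cases ht; linarith⟩
    refine ⟨(hY'ode (-t) htm).1, ?_⟩
    have h2 : HasDerivAt (fun s : ℝ => Y' (-s)) ((-1 : ℝ) • H' (Y' (-t))) t :=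
      HasDerivAt.scomp t (hY'ode (-t) htm).2 (hasDerivAt_neg t)
    simpa [hH'] using h2
  · intro t ht
    have htm : -t ∈ Set.Ioo (-αp) (-αm) := ⟨by cases ht; linarith, by cases ht; linarith⟩
    have := hY'eq (-t) htm
    simpa [hX'] using this

/-- Limits of maximal orbits: for the maximal solution `X` of `X' = H(X)`,
`X 0 = (w,h)` in the bounded open set `Ω`, with `H` Lipschitz, `|H₁| ≤ hM`,
`0 < hm ≤ H₂ ≤ hM`, the limits of `X` at the endpoints `αp` and `αm` of the maximal
interval exist and belong to `∂Ω ∩ {x₂ > h}` and `∂Ω ∩ {x₂ < h}` respectively. -/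
theorem stmt_17 (Ω : Set (ℝ × ℝ)) (hΩo : IsOpen Ω) (hΩb : Bornology.IsBounded Ω)
    (H : ℝ × ℝ → ℝ × ℝ) (K : NNReal) (hHlip : LipschitzOnWith K H (closure Ω))
    (hm hM : ℝ) (hm_pos : 0 < hm)
    (hH : ∀ x ∈ Ω, |(H x).1| ≤ hM ∧ hm ≤ (H x).2 ∧ (H x).2 ≤ hM)
    (w h : ℝ) (αm αp : ℝ) (X : ℝ → ℝ × ℝ)
    (hαm : αm < 0) (hαp : 0 < αp)
    (hinit : X 0 = (w, h)) (hwh : (w, h) ∈ Ω)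
    (hODE : ∀ t ∈ Set.Ioo αm αp, X t ∈ Ω ∧ HasDerivAt X (H (X t)) t)
    (hmaxp : ∀ (b : ℝ) (Y : ℝ → ℝ × ℝ), αp < b →
      (∀ t ∈ Set.Ioo αm b, Y t ∈ Ω ∧ HasDerivAt Y (H (Y t)) t) →
      (∀ t ∈ Set.Ioo αm αp, Y t = X t) → False)
    (hmaxm : ∀ (c : ℝ) (Y : ℝ → ℝ × ℝ), c < αm →
      (∀ t ∈ Set.Ioo c αp, Y t ∈ Ω ∧ HasDerivAt Y (H (Y t)) t) →
      (∀ t ∈ Set.Ioo αm αp, Y t = X t) → False) :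
    (∃ p : ℝ × ℝ, Filter.Tendsto X (nhdsWithin αp (Set.Iio αp)) (nhds p) ∧
      p ∈ frontier Ω ∧ h < p.2) ∧
    (∃ q : ℝ × ℝ, Filter.Tendsto X (nhdsWithin αm (Set.Ioi αm)) (nhds q) ∧
      q ∈ frontier Ω ∧ q.2 < h) := by
  obtain ⟨Cb, hCb⟩ := isBounded_iff_forall_norm_le.1 hΩb
  have hlt : αm < αp := lt_trans hαm hαp
  have hhm_le_hM : hm ≤ hM := le_trans (hH _ hwh).2.1 (hH _ hwh).2.2
  have hM_pos : 0 < hM := lt_of_lt_of_le hm_pos hhm_le_hM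
  set c : ℝ := 2 * hM / hm with hc
  have hc0 : 0 < c := by positivity
  set s := Set.Ioo αm αp with hs
  have h0s : (0:ℝ) ∈ s := ⟨hαm, hαp⟩
  have hne : s.Nonempty := ⟨0, h0s⟩
  set g : ℝ → ℝ := fun t => (X t).2 with hg
  set f : ℝ → ℝ := fun t => (X t).1 + c * (X t).2 with hf
  have hgd : ∀ t ∈ s, HasDerivAt g ((H (X t)).2) t := fun t ht =>
    hasDerivAt_csnd (hODE t ht).2
  have hfd : ∀ t ∈ s, HasDerivAt f ((H (X t)).1 + c * (H (X t)).2) t := fun t ht =>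
    (hasDerivAt_cfst (hODE t ht).2).add ((hasDerivAt_csnd (hODE t ht).2).const_mul c)
  have hgmono : StrictMonoOn g s := by
    apply strictMonoOn_of_deriv_pos (convex_Ioo αm αp)
    · exact fun t ht => (hgd t ht).continuousAt.continuousWithinAt
    · rw [interior_Ioo]
      intro t ht
      rw [(hgd t ht).deriv]
      exact lt_of_lt_of_le hm_pos (hH _ (hODE t ht).1).2.1
  have hfmono : StrictMonoOn f s := by
    apply strictMonoOn_of_deriv_pos (convex_Ioo αm αp)
    · exact fun t ht => (hfd t ht).continuousAt.continuousWithinAt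
    · rw [interior_Ioo]
      intro t ht
      rw [(hfd t ht).deriv]
      obtain ⟨h1, h2, _⟩ := hH _ (hODE t ht).1
      have h3 := (abs_le.1 h1).1
      have h4 : c * hm ≤ c * (H (X t)).2 := mul_le_mul_of_nonneg_left h2 hc0.le
      have h5 : c * hm = 2 * hM := div_mul_cancel₀ (2 * hM) hm_pos.ne'
      linarith
  have hgb : ∀ t ∈ s, |g t| ≤ Cb := fun t ht => by
    have := norm_snd_le (X t)
    have h2 := hCb _ (hODE t ht).1
    simp only [Real.norm_eq_abs] at this
    calc |g t| = |(X t).2| := rfl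
      _ ≤ ‖X t‖ := this
      _ ≤ Cb := h2
  have hfb : ∀ t ∈ s, |f t| ≤ Cb + c * Cb := fun t ht => by
    have h1 := norm_fst_le (X t)
    have h2 := norm_snd_le (X t)
    have h3 := hCb _ (hODE t ht).1
    simp only [Real.norm_eq_abs] at h1 h2
    calc |f t| = |(X t).1 + c * (X t).2| := rfl
      _ ≤ |(X t).1| + |c * (X t).2| := abs_add_le _ _
      _ = |(X t).1| + c * |(X t).2| := by rw [abs_mul, abs_of_pos hc0]
      _ ≤ Cb + c * Cb := by
          have := mul_le_mul_of_nonneg_left (h2.trans h3) hc0.le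
          have := h1.trans h3
          linarith
  have hbddg_above : BddAbove (g '' s) := by
    refine ⟨Cb, fun y hy => ?_⟩
    obtain ⟨t, ht, rfl⟩ := hy
    exact (le_abs_self _).trans (hgb t ht)
  have hbddg_below : BddBelow (g '' s) := by
    refine ⟨-Cb, fun y hy => ?_⟩
    obtain ⟨t, ht, rfl⟩ := hy
    exact neg_le_of_abs_le (hgb t ht)
  have hbddf_above : BddAbove (f '' s) := by
    refine ⟨Cb + c * Cb, fun y hy => ?_⟩
    obtain ⟨t, ht, rfl⟩ := hy
    exact (le_abs_self _).trans (hfb t ht)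
  have hbddf_below : BddBelow (f '' s) := by
    refine ⟨-(Cb + c * Cb), fun y hy => ?_⟩
    obtain ⟨t, ht, rfl⟩ := hy
    exact neg_le_of_abs_le (hfb t ht)
  -- limits at αp
  have htf : Filter.Tendsto f (nhdsWithin αp (Set.Iio αp)) (nhds (sSup (f '' s))) :=
    MonotoneOn.tendsto_nhdsWithin_Ioo_left hne hfmono.monotoneOn hbddf_above
  have htg : Filter.Tendsto g (nhdsWithin αp (Set.Iio αp)) (nhds (sSup (g '' s))) :=
    MonotoneOn.tendsto_nhdsWithin_Ioo_left hne hgmono.monotoneOn hbddg_above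
  have htf' : Filter.Tendsto f (nhdsWithin αm (Set.Ioi αm)) (nhds (sInf (f '' s))) :=
    MonotoneOn.tendsto_nhdsWithin_Ioo_right hne hfmono.monotoneOn hbddf_below
  have htg' : Filter.Tendsto g (nhdsWithin αm (Set.Ioi αm)) (nhds (sInf (g '' s))) :=
    MonotoneOn.tendsto_nhdsWithin_Ioo_right hne hgmono.monotoneOn hbddg_below
  have hXfg : X = fun t => (f t - c * g t, g t) := by
    funext t
    ext
    · show (X t).1 = f t - c * g t
      simp only [hf, hg]; ring
    · rfl
  set p : ℝ × ℝ := (sSup (f '' s) - c * sSup (g '' s), sSup (g '' s)) with hp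
  set q : ℝ × ℝ := (sInf (f '' s) - c * sInf (g '' s), sInf (g '' s)) with hq
  have hXp : Filter.Tendsto X (nhdsWithin αp (Set.Iio αp)) (nhds p) := by
    rw [hXfg]
    exact (htf.sub (htg.const_mul c)).prodMk_nhds htg
  have hXq : Filter.Tendsto X (nhdsWithin αm (Set.Ioi αm)) (nhds q) := by
    rw [hXfg]
    exact (htf'.sub (htg'.const_mul c)).prodMk_nhds htg'
  have hsmemp : s ∈ nhdsWithin αp (Set.Iio αp) :=
    Ioo_mem_nhdsLT_of_mem ⟨hlt, le_refl αp⟩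
  have hsmemm : s ∈ nhdsWithin αm (Set.Ioi αm) :=
    Ioo_mem_nhdsGT_of_mem ⟨le_refl αm, hlt⟩
  have hevp : ∀ᶠ t in nhdsWithin αp (Set.Iio αp), X t ∈ Ω :=
    Filter.mem_of_superset hsmemp fun t ht => (hODE t ht).1
  have hevm : ∀ᶠ t in nhdsWithin αm (Set.Ioi αm), X t ∈ Ω :=
    Filter.mem_of_superset hsmemm fun t ht => (hODE t ht).1
  have hg0 : g 0 = h := by rw [hg]; simp [hinit]
  constructor
  · refine ⟨p, hXp, ?_, ?_⟩
    · rw [hΩo.frontier_eq]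
      refine ⟨mem_closure_of_tendsto hXp hevp, fun hpΩ => ?_⟩
      obtain ⟨b, hb, Y, h1, h2⟩ := extendRight hΩo hHlip hlt hODE hXp hpΩ
      exact hmaxp b Y hb h1 h2
    · have hmem : αp / 2 ∈ s := ⟨by linarith, by linarith⟩
      have h1 : g 0 < g (αp / 2) := hgmono h0s hmem (by linarith)
      have h2 : g (αp / 2) ≤ sSup (g '' s) :=
        le_csSup hbddg_above (Set.mem_image_of_mem g hmem)
      show h < p.2
      rw [hp, ← hg0]
      exact lt_of_lt_of_le h1 h2
  · refine ⟨q, hXq, ?_, ?_⟩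
    · rw [hΩo.frontier_eq]
      refine ⟨mem_closure_of_tendsto hXq hevm, fun hqΩ => ?_⟩
      obtain ⟨cc, hcc, Y, h1, h2⟩ := extendLeft hΩo hHlip hlt hODE hXq hqΩ
      exact hmaxm cc Y hcc h1 h2
    · have hmem : αm / 2 ∈ s := ⟨by linarith, by linarith⟩
      have h1 : g (αm / 2) < g 0 := hgmono hmem h0s (by linarith)
      have h2 : sInf (g '' s) ≤ g (αm / 2) :=
        csInf_le hbddg_below (Set.mem_image_of_mem g hmem)
      show q.2 < h
      rw [hq, ← hg0]
      exact lt_of_le_of_lt h2 h1
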